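/- Consider a stochastic shortest path model with finite state space Fin N (N ≥ 1), a nonempty finite action set A s for each state s, costs c : (s : Fin N) → A s → ℝ, and transitions P : (s : Fin N) → A s → Fin N → ℝ with P s a s' ≥ 0 and ∑_{s'} P s a s' ≤ 1 for all s, a. Suppose every stationary policy is proper, i.e., for every π : (s : Fin N) → A s, every row of the N-th matrix power of P_π (the matrix with entries (P_π)_{s,s'} = P s (π s) s') has sum strictly less than 1. Then the optimal Bellman operator U, defined by (U x) s = min_{a ∈ A s} (c s a + ∑_{s'} P s a s' · x s'), is a contraction in a weighted supremum norm: there exist weights ω : Fin N → ℝ with 0 < ω s < 1 for all s and a constant γ ∈ (0,1) such that for all x, y : Fin N → ℝ, max_s (|(U x) s − (U y) s| / ω s) ≤ γ · max_s (|x s − y s| / ω s). -/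

import Mathlib

theorem stmt_3 (N : ℕ) (hN : 0 < N) (A : Fin N → Type)
    [∀ s, Fintype (A s)] [∀ s, Nonempty (A s)]
    (c : ∀ s, A s → ℝ) (P : ∀ s, A s → Fin N → ℝ)
    (hP_nonneg : ∀ s a s', 0 ≤ P s a s')
    (hP_sub : ∀ s a, ∑ s', P s a s' ≤ 1)
    (hproper : ∀ π : ∀ s, A s, ∀ s,
      ∑ s', ((Matrix.of fun s₁ s₂ => P s₁ (π s₁) s₂) ^ N) s s' < 1) :
    ∃ (ω : Fin N → ℝ) (γ : ℝ),
      (∀ s, 0 < ω s ∧ ω s < 1) ∧ 0 < γ ∧ γ < 1 ∧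
      ∀ x y : Fin N → ℝ,
        (⨆ s, |(⨅ a, c s a + ∑ s', P s a s' * x s') -
            (⨅ a, c s a + ∑ s', P s a s' * y s')| / ω s)
          ≤ γ * ⨆ s, |x s - y s| / ω s := by
  classical
  haveI : Nonempty (Fin N) := ⟨⟨0, hN⟩⟩
  -- the max-survival operator
  set Q : (Fin N → ℝ) → Fin N → ℝ := fun v s => ⨆ a, ∑ s', P s a s' * v s' with hQdef
  clear_value Q
  have bddA : ∀ (s : Fin N) (f : A s → ℝ), BddAbove (Set.range f) :=
    fun s f => (Set.finite_range f).bddAbove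
  have bddA' : ∀ (s : Fin N) (f : A s → ℝ), BddBelow (Set.range f) :=
    fun s f => (Set.finite_range f).bddBelow
  have hQ_ge : ∀ v (s : Fin N) (a : A s), ∑ s', P s a s' * v s' ≤ Q v s := by
    intro v s a
    simp only [hQdef]
    exact le_ciSup (f := fun a : A s => ∑ s', P s a s' * v s') (bddA s _) a
  have hQ_le : ∀ v (s : Fin N) (b : ℝ), (∀ a : A s, ∑ s', P s a s' * v s' ≤ b) → Q v s ≤ b := by
    intro v s b h
    simp only [hQdef]
    exact ciSup_le h
  have hQ_mono : ∀ v w : Fin N → ℝ, (∀ s', v s' ≤ w s') → ∀ s, Q v s ≤ Q w s := by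
    intro v w hvw s
    refine hQ_le v s _ (fun a => le_trans ?_ (hQ_ge w s a))
    exact Finset.sum_le_sum fun s' _ => mul_le_mul_of_nonneg_left (hvw s') (hP_nonneg s a s')
  -- iterates starting from the constant 1
  set u : ℕ → Fin N → ℝ := fun n => Q^[n] (fun _ => 1) with hudef
  clear_value u
  have hu0 : ∀ s, u 0 s = 1 := by
    intro s
    simp only [hudef, Function.iterate_zero_apply]
  have huS : ∀ n, u (n + 1) = Q (u n) := by
    intro n
    simp only [hudef, Function.iterate_succ_apply']
  have hu_nonneg : ∀ n s, 0 ≤ u n s := by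
    intro n
    induction n with
    | zero => intro s; rw [hu0]; norm_num
    | succ n ih =>
      intro s
      rw [huS]
      refine le_trans ?_ (hQ_ge (u n) s (Classical.arbitrary (A s)))
      exact Finset.sum_nonneg fun s' _ => mul_nonneg (hP_nonneg _ _ _) (ih s')
  have hu_le_one : ∀ n s, u n s ≤ 1 := by
    intro n
    induction n with
    | zero => intro s; rw [hu0]
    | succ n ih =>
      intro s
      rw [huS]
      refine hQ_le (u n) s 1 (fun a => ?_)
      calc ∑ s', P s a s' * u n s' ≤ ∑ s', P s a s' * 1 :=
            Finset.sum_le_sum fun s' _ =>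
              mul_le_mul_of_nonneg_left (ih s') (hP_nonneg s a s')
        _ ≤ 1 := by simpa using hP_sub s a
  have hu_step : ∀ n s, u (n + 1) s ≤ u n s := by
    intro n
    induction n with
    | zero => intro s; rw [hu0]; exact hu_le_one 1 s
    | succ n ih =>
      intro s
      have h := hQ_mono (u (n + 1)) (u n) ih s
      rw [← huS (n + 1), ← huS n] at h
      exact h
  have hu_anti : ∀ s, Antitone fun n => u n s := fun s =>
    antitone_nat_of_succ_le (fun n => hu_step n s)
  have hu_anti' : ∀ s m n, m ≤ n → u n s ≤ u m s := fun s m n h => hu_anti s h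
  -- the limit v
  set v : Fin N → ℝ := fun s => ⨅ n, u n s with hvdef
  have hvdef' : ∀ s, v s = ⨅ n, u n s := fun s => by rw [hvdef]
  clear_value v
  have bddu : ∀ s, BddBelow (Set.range fun n => u n s) := by
    intro s
    exact ⟨0, by rintro x ⟨n, rfl⟩; exact hu_nonneg n s⟩
  have hv_le : ∀ s n, v s ≤ u n s := by
    intro s n
    simp only [hvdef]
    exact ciInf_le (bddu s) n
  have hv_nonneg : ∀ s, 0 ≤ v s := by
    intro s
    simp only [hvdef]
    exact le_ciInf fun n => hu_nonneg n s
  -- approximate fixed point property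
  have hclaim : ∀ (s : Fin N) (ε : ℝ), 0 < ε → ∃ a : A s, v s ≤ ∑ s', P s a s' * v s' + ε := by
    intro s ε hε
    have hns : ∀ s' : Fin N, ∃ n, u n s' < v s' + ε := by
      intro s'
      have h : ⨅ n, u n s' < v s' + ε := by
        rw [← hvdef' s']
        linarith
      exact exists_lt_of_ciInf_lt h
    choose nf hnf using hns
    set n : ℕ := Finset.univ.sup nf with hndef
    have hun : ∀ s', u n s' ≤ v s' + ε := fun s' =>
      le_trans (hu_anti' s' (nf s') n (Finset.le_sup (Finset.mem_univ s'))) (hnf s').le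
    obtain ⟨a, ha⟩ := Finite.exists_max (fun a : A s => ∑ s', P s a s' * u n s')
    refine ⟨a, ?_⟩
    have h1 : v s ≤ ∑ s', P s a s' * u n s' := by
      have h2 := hv_le s (n + 1)
      rw [huS] at h2
      exact le_trans h2 (hQ_le (u n) s _ ha)
    calc v s ≤ ∑ s', P s a s' * u n s' := h1
      _ ≤ ∑ s', P s a s' * (v s' + ε) :=
          Finset.sum_le_sum fun s' _ => mul_le_mul_of_nonneg_left (hun s') (hP_nonneg s a s')
      _ = (∑ s', P s a s' * v s') + (∑ s', P s a s') * ε := by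
          rw [Finset.sum_mul, ← Finset.sum_add_distrib]
          congr 1; funext s'; ring
      _ ≤ (∑ s', P s a s' * v s') + ε := by
          have h2 : (∑ s', P s a s') * ε ≤ 1 * ε :=
            mul_le_mul_of_nonneg_right (hP_sub s a) hε.le
          linarith
  -- an exact fixed-point policy
  have hfix : ∀ s : Fin N, ∃ a : A s, v s ≤ ∑ s', P s a s' * v s' := by
    intro s
    by_contra hcon
    push_neg at hcon
    obtain ⟨a₀, ha₀⟩ := Finite.exists_max (fun a : A s => ∑ s', P s a s' * v s')
    have hε : 0 < v s - ∑ s', P s a₀ s' * v s' := by have := hcon a₀; linarith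
    obtain ⟨a, ha⟩ := hclaim s ((v s - ∑ s', P s a₀ s' * v s') / 2) (by linarith)
    have := ha₀ a
    linarith
  choose π hπ using hfix
  -- matrix of the chosen policy
  set M : Matrix (Fin N) (Fin N) ℝ := Matrix.of fun s₁ s₂ => P s₁ (π s₁) s₂ with hMdef
  clear_value M
  have hM_entry : ∀ s s', M s s' = P s (π s) s' := by
    intro s s'
    rw [hMdef]
    rfl
  have hM_nonneg : ∀ k (s s' : Fin N), 0 ≤ (M ^ k) s s' := by
    intro k
    induction k with
    | zero =>
      intro s s'
      rw [pow_zero, Matrix.one_apply]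
      split <;> norm_num
    | succ k ih =>
      intro s s'
      rw [pow_succ, Matrix.mul_apply]
      refine Finset.sum_nonneg fun j _ => mul_nonneg (ih s j) ?_
      rw [hM_entry]; exact hP_nonneg j (π j) s'
  have hMv : ∀ k (s : Fin N), v s ≤ ((M ^ k).mulVec v) s := by
    intro k
    induction k with
    | zero => intro s; rw [pow_zero, Matrix.one_mulVec]
    | succ k ih =>
      intro s
      have h1 : v s ≤ (M.mulVec v) s := by
        have := hπ s
        simpa [Matrix.mulVec, dotProduct, hM_entry] using this
      have h2 : (M.mulVec v) s ≤ (M.mulVec ((M ^ k).mulVec v)) s := by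
        simp only [Matrix.mulVec, dotProduct]
        refine Finset.sum_le_sum fun j _ => mul_le_mul_of_nonneg_left (ih j) ?_
        rw [hM_entry]; exact hP_nonneg s (π s) j
      have h3 : M.mulVec ((M ^ k).mulVec v) = (M ^ (k + 1)).mulVec v := by
        rw [Matrix.mulVec_mulVec, ← pow_succ']
      calc v s ≤ (M.mulVec v) s := h1
        _ ≤ (M.mulVec ((M ^ k).mulVec v)) s := h2
        _ = ((M ^ (k + 1)).mulVec v) s := by rw [h3]
  -- v = 0
  have hv_zero : ∀ s, v s = 0 := by
    obtain ⟨s₀, hs₀⟩ := Finite.exists_max v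
    have hrow := hproper π s₀
    rw [← hMdef] at hrow
    have h1 : v s₀ ≤ ∑ s', (M ^ N) s₀ s' * v s' := by
      have := hMv N s₀
      simpa [Matrix.mulVec, dotProduct] using this
    have h2 : ∑ s', (M ^ N) s₀ s' * v s' ≤ (∑ s', (M ^ N) s₀ s') * v s₀ := by
      rw [Finset.sum_mul]
      exact Finset.sum_le_sum fun s' _ =>
        mul_le_mul_of_nonneg_left (hs₀ s') (hM_nonneg N s₀ s')
    have hT_le : v s₀ ≤ 0 := by
      by_contra h
      push_neg at h
      have : (∑ s', (M ^ N) s₀ s') * v s₀ < 1 * v s₀ :=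
        mul_lt_mul_of_pos_right hrow h
      linarith
    intro s
    exact le_antisymm (le_trans (hs₀ s) hT_le) (hv_nonneg s)
  -- find m with u m ≤ 1/2 everywhere
  obtain ⟨m, hm1, hmu⟩ : ∃ m : ℕ, 1 ≤ m ∧ ∀ s, u m s ≤ 1 / 2 := by
    have hns : ∀ s : Fin N, ∃ n, u n s < 1 / 2 := by
      intro s
      have h : ⨅ n, u n s < 1 / 2 := by
        rw [← hvdef' s, hv_zero s]
        norm_num
      exact exists_lt_of_ciInf_lt h
    choose nf hnf using hns
    refine ⟨max 1 (Finset.univ.sup nf), le_max_left _ _, fun s => ?_⟩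
    refine le_trans (hu_anti' s (nf s) _ ?_) (hnf s).le
    exact le_trans (Finset.le_sup (Finset.mem_univ s)) (le_max_right _ _)
  have hm1' : (1 : ℝ) ≤ m := by exact_mod_cast hm1
  -- the weight vector
  set w : Fin N → ℝ := fun s => ∑ k ∈ Finset.range m, u k s with hwdef
  have hwdef' : ∀ s, w s = ∑ k ∈ Finset.range m, u k s := fun s => by rw [hwdef]
  clear_value w
  have hw_ge1 : ∀ s, 1 ≤ w s := by
    intro s
    rw [hwdef' s]
    have h0 : (0 : ℕ) ∈ Finset.range m := Finset.mem_range.mpr hm1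
    calc (1 : ℝ) = u 0 s := (hu0 s).symm
      _ ≤ ∑ k ∈ Finset.range m, u k s :=
          Finset.single_le_sum (fun k _ => hu_nonneg k s) h0
  have hw_le : ∀ s, w s ≤ m := by
    intro s
    rw [hwdef' s]
    calc ∑ k ∈ Finset.range m, u k s ≤ ∑ _k ∈ Finset.range m, (1 : ℝ) :=
          Finset.sum_le_sum fun k _ => hu_le_one k s
      _ = m := by simp
  have hkey : ∀ (s : Fin N) (a : A s), ∑ s', P s a s' * w s' ≤ w s - 1 / 2 := by
    intro s a
    have hswap : ∑ s', P s a s' * w s' = ∑ k ∈ Finset.range m, ∑ s', P s a s' * u k s' := by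
      simp only [hwdef, Finset.mul_sum]
      rw [Finset.sum_comm]
    rw [hswap]
    have h1 : ∑ k ∈ Finset.range m, ∑ s', P s a s' * u k s'
        ≤ ∑ k ∈ Finset.range m, u (k + 1) s := by
      refine Finset.sum_le_sum fun k _ => ?_
      rw [huS]
      exact hQ_ge (u k) s a
    have h2 : ∑ k ∈ Finset.range m, u (k + 1) s = w s + u m s - 1 := by
      have hs' := Finset.sum_range_succ' (fun k => u k s) m
      have h3 : ∑ k ∈ Finset.range (m + 1), u k s = w s + u m s := by
        rw [Finset.sum_range_succ, hwdef' s]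
      rw [h3, hu0] at hs'
      linarith
    have h4 := hmu s
    linarith
  -- define ω and γ
  set ω : Fin N → ℝ := fun s => w s / (m + 1) with hωdef
  have hωdef' : ∀ s, ω s = w s / (m + 1) := fun s => by rw [hωdef]
  clear_value ω
  set γ : ℝ := 1 - 1 / (2 * m) with hγdef
  clear_value γ
  have hmpos : (0 : ℝ) < m + 1 := by linarith
  have hω_pos : ∀ s, 0 < ω s := by
    intro s
    rw [hωdef' s]
    exact div_pos (by linarith [hw_ge1 s]) hmpos
  have hω_lt : ∀ s, ω s < 1 := by
    intro s
    rw [hωdef' s]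
    exact (div_lt_one hmpos).mpr (by linarith [hw_le s])
  have hγ_pos : 0 < γ := by
    have h1 : 1 / (2 * (m : ℝ)) ≤ 1 / 2 := by
      apply one_div_le_one_div_of_le <;> linarith
    simp only [hγdef]; linarith
  have hγ_lt : γ < 1 := by
    have h1 : 0 < 1 / (2 * (m : ℝ)) := by positivity
    simp only [hγdef]; linarith
  have hcontract : ∀ (s : Fin N) (a : A s), ∑ s', P s a s' * ω s' ≤ γ * ω s := by
    intro s a
    have h1 : ∑ s', P s a s' * ω s' = (∑ s', P s a s' * w s') / (m + 1) := by
      rw [Finset.sum_div]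
      congr 1; funext s'
      simp only [hωdef]; ring
    rw [h1]
    have h2 : ∑ s', P s a s' * w s' ≤ w s - 1 / 2 := hkey s a
    have h3 : w s - 1 / 2 ≤ γ * w s := by
      have h4 : w s / (2 * m) ≤ 1 / 2 := by
        rw [div_le_div_iff₀ (by linarith) (by norm_num)]
        linarith [hw_le s]
      have h5 : γ * w s = w s - w s / (2 * m) := by
        simp only [hγdef]
        field_simp
      linarith
    have h6 : γ * ω s = (γ * w s) / (m + 1) := by
      simp only [hωdef]; ring
    rw [h6]
    exact div_le_div_of_nonneg_right (le_trans h2 h3) hmpos.le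
  refine ⟨ω, γ, fun s => ⟨hω_pos s, hω_lt s⟩, hγ_pos, hγ_lt, ?_⟩
  intro x y
  set K : ℝ := ⨆ s, |x s - y s| / ω s with hKdef
  clear_value K
  have bddF : ∀ f : Fin N → ℝ, BddAbove (Set.range f) := fun f => (Set.finite_range f).bddAbove
  have hK_ge : ∀ s, |x s - y s| / ω s ≤ K := by
    intro s
    simp only [hKdef]
    exact le_ciSup (f := fun s => |x s - y s| / ω s) (bddF _) s
  have hK0 : 0 ≤ K := by
    have s₀ : Fin N := Classical.arbitrary _
    exact le_trans (div_nonneg (abs_nonneg _) (hω_pos s₀).le) (hK_ge s₀)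
  have hKb : ∀ s, |x s - y s| ≤ K * ω s := by
    intro s
    have := hK_ge s
    rw [div_le_iff₀ (hω_pos s)] at this
    linarith
  have hmain : ∀ s : Fin N,
      |(⨅ a, c s a + ∑ s', P s a s' * x s') - (⨅ a, c s a + ∑ s', P s a s' * y s')|
        ≤ γ * K * ω s := by
    intro s
    set B : ℝ := γ * K * ω s with hBdef
    clear_value B
    have habs : ∀ a : A s,
        |(c s a + ∑ s', P s a s' * x s') - (c s a + ∑ s', P s a s' * y s')| ≤ B := by
      intro a
      have h1 : (c s a + ∑ s', P s a s' * x s') - (c s a + ∑ s', P s a s' * y s')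
          = ∑ s', P s a s' * (x s' - y s') := by
        have h0 : ∑ s', P s a s' * (x s' - y s')
            = ∑ s', (P s a s' * x s' - P s a s' * y s') := by
          congr 1; funext s'; ring
        rw [h0, Finset.sum_sub_distrib]
        ring
      rw [h1]
      calc |∑ s', P s a s' * (x s' - y s')| ≤ ∑ s', |P s a s' * (x s' - y s')| :=
            Finset.abs_sum_le_sum_abs _ _
        _ = ∑ s', P s a s' * |x s' - y s'| := by
            congr 1; funext s'
            rw [abs_mul, abs_of_nonneg (hP_nonneg s a s')]
        _ ≤ ∑ s', P s a s' * (K * ω s') :=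
            Finset.sum_le_sum fun s' _ =>
              mul_le_mul_of_nonneg_left (hKb s') (hP_nonneg s a s')
        _ = K * ∑ s', P s a s' * ω s' := by
            rw [Finset.mul_sum]; congr 1; funext s'; ring
        _ ≤ K * (γ * ω s) := mul_le_mul_of_nonneg_left (hcontract s a) hK0
        _ = B := by rw [hBdef]; ring
    have hd1 : (⨅ a, c s a + ∑ s', P s a s' * x s') - B
        ≤ ⨅ a, c s a + ∑ s', P s a s' * y s' := by
      refine le_ciInf fun a => ?_
      have h1 : (⨅ a, c s a + ∑ s', P s a s' * x s') ≤ c s a + ∑ s', P s a s' * x s' :=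
        ciInf_le (bddA' s _) a
      have h2 := (abs_le.mp (habs a)).2
      linarith
    have hd2 : (⨅ a, c s a + ∑ s', P s a s' * y s') - B
        ≤ ⨅ a, c s a + ∑ s', P s a s' * x s' := by
      refine le_ciInf fun a => ?_
      have h1 : (⨅ a, c s a + ∑ s', P s a s' * y s') ≤ c s a + ∑ s', P s a s' * y s' :=
        ciInf_le (bddA' s _) a
      have h2 := (abs_le.mp (habs a)).1
      linarith
    rw [abs_le]
    constructor <;> [linarith [hd2]; linarith [hd1]]
  refine ciSup_le fun s => ?_
  rw [div_le_iff₀ (hω_pos s)]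
  calc |(⨅ a, c s a + ∑ s', P s a s' * x s') - (⨅ a, c s a + ∑ s', P s a s' * y s')|
      ≤ γ * K * ω s := hmain s
    _ = γ * K * ω s := rfl
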